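/- Let λ̂₁, λ̂₂ ∈ ℝ³ be unit vectors, and let V₁, V₂ ∈ ℝ³ satisfy V₁·λ̂₁ = 0, V₂·λ̂₂ = 0, and (λ̂₂·u)(V₁·u) + (λ̂₁·u)(V₂·u) = 0 for all u ∈ ℝ³. Then V₁·V₂ + (λ̂₁·λ̂₂)‖V₁‖² = 0 and V₁·V₂ + (λ̂₁·λ̂₂)‖V₂‖² = 0; in particular, if λ̂₁·λ̂₂ ≠ 0 then ‖V₁‖ = ‖V₂‖. -/
import Mathlib


open scoped RealInnerProductSpace

/-- For unit vectors `λ̂₁, λ̂₂ ∈ ℝ³` and `V₁ ⊥ λ̂₁`, `V₂ ⊥ λ̂₂` with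
`(λ̂₂·u)(V₁·u) + (λ̂₁·u)(V₂·u) = 0` for all `u`, one has
`V₁·V₂ + (λ̂₁·λ̂₂)‖V₁‖² = 0` and `V₁·V₂ + (λ̂₁·λ̂₂)‖V₂‖² = 0`; in particular, if
`λ̂₁·λ̂₂ ≠ 0` then `‖V₁‖ = ‖V₂‖`. -/
theorem stmt_6 (l₁ l₂ V₁ V₂ : EuclideanSpace ℝ (Fin 3))
    (hl₁ : ‖l₁‖ = 1) (hl₂ : ‖l₂‖ = 1)
    (hV₁ : ⟪V₁, l₁⟫ = 0) (hV₂ : ⟪V₂, l₂⟫ = 0)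
    (h : ∀ u : EuclideanSpace ℝ (Fin 3), ⟪l₂, u⟫ * ⟪V₁, u⟫ + ⟪l₁, u⟫ * ⟪V₂, u⟫ = 0) :
    ⟪V₁, V₂⟫ + ⟪l₁, l₂⟫ * ‖V₁‖ ^ 2 = 0 ∧
    ⟪V₁, V₂⟫ + ⟪l₁, l₂⟫ * ‖V₂‖ ^ 2 = 0 ∧
    (⟪l₁, l₂⟫ ≠ 0 → ‖V₁‖ = ‖V₂‖) := by
  have hl₁' : ⟪l₁, l₁⟫ = 1 := by
    rw [real_inner_self_eq_norm_sq, hl₁]; norm_num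
  have hl₂' : ⟪l₂, l₂⟫ = 1 := by
    rw [real_inner_self_eq_norm_sq, hl₂]; norm_num
  -- cross orthogonality
  have hc1 : ⟪V₁, l₂⟫ = 0 := by
    have := h l₂
    rw [hl₂', hV₂] at this
    linarith [this]
  have hc2 : ⟪V₂, l₁⟫ = 0 := by
    have := h l₁
    rw [hl₁', hV₁] at this
    linarith [this]
  have e1 : ⟪V₁, V₂⟫ + ⟪l₁, l₂⟫ * ‖V₁‖ ^ 2 = 0 := by
    have := h (l₁ + V₁)
    simp only [inner_add_right] at this
    rw [real_inner_comm V₁ l₂, real_inner_comm V₁ l₁, real_inner_comm l₁ l₂,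
      real_inner_comm V₁ V₂, hV₁, hc1, hc2, hl₁'] at this
    rw [← real_inner_self_eq_norm_sq]
    linarith [this]
  have e2 : ⟪V₁, V₂⟫ + ⟪l₁, l₂⟫ * ‖V₂‖ ^ 2 = 0 := by
    have := h (l₂ + V₂)
    simp only [inner_add_right] at this
    rw [real_inner_comm V₂ l₂, real_inner_comm V₂ l₁, hV₂, hc1, hc2, hl₂'] at this
    rw [← real_inner_self_eq_norm_sq]
    linarith [this]
  refine ⟨e1, e2, fun hne => ?_⟩
  have : ‖V₁‖ ^ 2 = ‖V₂‖ ^ 2 :=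
    mul_left_cancel₀ hne (by linarith : ⟪l₁, l₂⟫ * ‖V₁‖ ^ 2 = ⟪l₁, l₂⟫ * ‖V₂‖ ^ 2)
  rw [← Real.sqrt_sq (norm_nonneg V₁), ← Real.sqrt_sq (norm_nonneg V₂), this]
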